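/- arXiv:1804.01865 — 2 statements merged into one kernel-verified Lean document; each statement's English description precedes it below -/
import Mathlib

section
/- Let A generate a strongly continuous semigroup e^{At} on a Banach space X, let N ∈ C¹([0,T]), α > 0, and let w ∈ C([0,T]; X) satisfy the mild Coleman–Gurtin equation w(t) = u(t) + ∫₀ᵗ e^{αA(t-s)} ∫₀ˢ N(s-r) A w(r) dr ds, where u(t) = e^{αAt} w₀, and assume w(t) ∈ dom A with Aw continuous. Then after an integration by parts w satisfies the Volterra equation w(t) = u(t) − (1/α) ∫₀ᵗ N(t-r) w(r) dr + (1/α) ∫₀ᵗ e^{αA(t-s)} [ N(0) w(s) + ∫₀ˢ N'(s-r) w(r) dr ] ds, in which the operator A no longer appears. -/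
open MeasureTheory intervalIntegral Set


lemma semigroup_joint_cont {X : Type*} [NormedAddCommGroup X] [NormedSpace ℝ X]
    [CompleteSpace X] (S : ℝ → X →L[ℝ] X) (hScont : ∀ x : X, Continuous fun t => S t x) :
    Continuous fun p : ℝ × X => S p.1 p.2 := by
  rw [continuous_iff_continuousAt]
  rintro ⟨s₀, x₀⟩
  obtain ⟨C, hC⟩ : ∃ C, ∀ i : Icc (s₀ - 1) (s₀ + 1), ‖S (i : ℝ)‖ ≤ C := by
    apply banach_steinhaus
    intro x
    obtain ⟨C, hC⟩ := (isCompact_Icc (a := s₀ - 1) (b := s₀ + 1)).exists_bound_of_continuousOn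
      ((hScont x).continuousOn)
    exact ⟨C, fun i => hC i i.2⟩
  have key : ∀ p : ℝ × X, S p.1 p.2 = S p.1 (p.2 - x₀) + S p.1 x₀ := by
    intro p; rw [map_sub]; abel
  have h1 : ContinuousAt (fun p : ℝ × X => S p.1 x₀) (s₀, x₀) :=
    ((hScont x₀).comp continuous_fst).continuousAt
  have h2 : Filter.Tendsto (fun p : ℝ × X => S p.1 (p.2 - x₀)) (nhds (s₀, x₀)) (nhds 0) := by
    apply squeeze_zero_norm' (a := fun p : ℝ × X => C * ‖p.2 - x₀‖)
    · have : ∀ᶠ p : ℝ × X in nhds (s₀, x₀), p.1 ∈ Icc (s₀ - 1) (s₀ + 1) := by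
        apply Filter.Tendsto.eventually_mem (continuous_fst.tendsto _)
        exact Icc_mem_nhds (by linarith) (by linarith)
      filter_upwards [this] with p hp
      calc ‖S p.1 (p.2 - x₀)‖ ≤ ‖S p.1‖ * ‖p.2 - x₀‖ := (S p.1).le_opNorm _
        _ ≤ C * ‖p.2 - x₀‖ := by
            apply mul_le_mul_of_nonneg_right (hC ⟨p.1, hp⟩) (norm_nonneg _)
    · have : Filter.Tendsto (fun p : ℝ × X => p.2 - x₀) (nhds (s₀, x₀)) (nhds 0) := by
        have h3 : Continuous (fun p : ℝ × X => p.2 - x₀) := continuous_snd.sub continuous_const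
        simpa using h3.tendsto (s₀, x₀)
      simpa using (this.norm.const_mul C)
  have := h2.add h1
  simp only [ContinuousAt]
  convert this using 2 with p
  · exact key p
  · simp


lemma triangle_swap {X : Type*} [NormedAddCommGroup X] [NormedSpace ℝ X] [CompleteSpace X]
    (g : ℝ → ℝ → X) (hg : Continuous fun p : ℝ × ℝ => g p.1 p.2) {t : ℝ} (ht : 0 ≤ t) :
    ∫ s in (0:ℝ)..t, ∫ r in (0:ℝ)..s, g s r
      = ∫ r in (0:ℝ)..t, ∫ s in r..t, g s r := by
  set T : Set (ℝ × ℝ) := {p : ℝ × ℝ | p.2 ≤ p.1} with hT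
  have hTmeas : MeasurableSet T := (isClosed_le continuous_snd continuous_fst).measurableSet
  set f : ℝ × ℝ → X := T.indicator (fun p => g p.1 p.2) with hf
  have hint : Integrable f
      ((volume.restrict (Ioc (0:ℝ) t)).prod (volume.restrict (Ioc (0:ℝ) t))) := by
    rw [Measure.prod_restrict]
    apply (IntegrableOn.mono_set ?_
      (prod_mono Ioc_subset_Icc_self Ioc_subset_Icc_self)).indicator hTmeas
    exact hg.continuousOn.integrableOn_compact (isCompact_Icc.prod isCompact_Icc)
  have swap := integral_integral_swap (f := fun s r => f (s, r)) hint
  have hL : ∫ s in (0:ℝ)..t, ∫ r in (0:ℝ)..s, g s r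
      = ∫ s in Ioc (0:ℝ) t, (∫ r in Ioc (0:ℝ) t, f (s, r)) := by
    rw [integral_of_le ht]
    apply setIntegral_congr_fun measurableSet_Ioc
    intro s hs
    have h1 : (fun r => f (s, r)) = (Iic s).indicator (fun r => g s r) := by
      funext r
      by_cases h : r ≤ s
      · simp [hf, hT, indicator_of_mem, h, Set.mem_setOf_eq, Set.mem_Iic]
      · simp [hf, hT, indicator_of_notMem, h, Set.mem_setOf_eq, Set.mem_Iic]
    show (∫ r in (0:ℝ)..s, g s r) = ∫ r in Ioc (0:ℝ) t, f (s, r)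
    rw [integral_of_le hs.1.le, h1, setIntegral_indicator measurableSet_Iic,
      Ioc_inter_Iic, min_eq_right hs.2]
  have hR : ∫ r in (0:ℝ)..t, ∫ s in r..t, g s r
      = ∫ r in Ioc (0:ℝ) t, (∫ s in Ioc (0:ℝ) t, f (s, r)) := by
    rw [integral_of_le ht]
    apply setIntegral_congr_fun measurableSet_Ioc
    intro r hr
    have h1 : (fun s => f (s, r)) = (Ici r).indicator (fun s => g s r) := by
      funext s
      by_cases h : r ≤ s
      · simp [hf, hT, indicator_of_mem, h, Set.mem_setOf_eq, Set.mem_Ici]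
      · simp [hf, hT, indicator_of_notMem, h, Set.mem_setOf_eq, Set.mem_Ici]
    have h2 : Ioc (0:ℝ) t ∩ Ici r = Icc r t := by
      ext s
      simp only [Set.mem_inter_iff, Set.mem_Ioc, Set.mem_Ici, Set.mem_Icc]
      constructor
      · rintro ⟨⟨_, h1⟩, h2⟩; exact ⟨h2, h1⟩
      · rintro ⟨h1, h2⟩; exact ⟨⟨lt_of_lt_of_le hr.1 h1, h2⟩, h1⟩
    show (∫ s in r..t, g s r) = ∫ s in Ioc (0:ℝ) t, f (s, r)
    rw [integral_of_le hr.2, h1, setIntegral_indicator measurableSet_Ici, h2,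
      integral_Icc_eq_integral_Ioc]
  rw [hL, hR, swap]


/-- Reduction of the mild Coleman–Gurtin equation to an `A`-free Volterra equation:
if `S t = e^{αAt}` is the semigroup generated by `αA` (`α > 0`) and `w` satisfies
`w t = S t w₀ + ∫₀ᵗ S (t-s) ∫₀ˢ N (s-r) A (w r) dr ds` with values in `dom A`,
then after an integration by parts
`w t = S t w₀ - (1/α) ∫₀ᵗ N (t-r) w r dr
      + (1/α) ∫₀ᵗ S (t-s) [N 0 • w s + ∫₀ˢ N' (s-r) w r dr] ds`,
in which the operator `A` no longer appears. -/
theorem coleman_gurtin_A_free_reduction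
    {X : Type*} [NormedAddCommGroup X] [NormedSpace ℝ X] [CompleteSpace X]
    (T α : ℝ) (hT : 0 < T) (hα : 0 < α)
    (S : ℝ → X →L[ℝ] X)
    (hS0 : S 0 = ContinuousLinearMap.id ℝ X)
    (hSadd : ∀ s t : ℝ, S (s + t) = (S s).comp (S t))
    (hScont : ∀ x : X, Continuous fun t => S t x)
    (D : Submodule ℝ X) (A : D →ₗ[ℝ] X)
    (hgen : ∀ (x : D) (t : ℝ), HasDerivAt (fun τ => S τ (x : X)) (α • S t (A x)) t)
    (N : ℝ → ℝ) (hN : ContDiff ℝ 1 N)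
    (w : ℝ → X) (w₀ : X) (hw : Continuous w) (hmem : ∀ t, w t ∈ D)
    (hAw : Continuous fun t => A ⟨w t, hmem t⟩)
    (hmild : ∀ t ∈ Set.Icc (0 : ℝ) T,
        w t = S t w₀
          + ∫ s in (0 : ℝ)..t, S (t - s)
              (∫ r in (0 : ℝ)..s, N (s - r) • A ⟨w r, hmem r⟩)) :
    ∀ t ∈ Set.Icc (0 : ℝ) T,
      w t = S t w₀ - (1 / α) • (∫ r in (0 : ℝ)..t, N (t - r) • w r)
        + (1 / α) • ∫ s in (0 : ℝ)..t, S (t - s)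
            (N 0 • w s + ∫ r in (0 : ℝ)..s, deriv N (s - r) • w r) := by

  intro t ht
  obtain ⟨ht0, htT⟩ := ht
  have hα' : α ≠ 0 := ne_of_gt hα
  set Aw : ℝ → X := fun r => A ⟨w r, hmem r⟩ with hAwdef
  have hAwc : Continuous Aw := hAw
  have jS : Continuous fun p : ℝ × X => S p.1 p.2 := semigroup_joint_cont S hScont
  have hNc : Continuous N := hN.continuous
  have hNd : Differentiable ℝ N := hN.differentiable one_ne_zero
  have hN'c : Continuous (deriv N) := hN.continuous_deriv le_rfl
  have cS : ∀ (φ : ℝ → X), Continuous φ → Continuous fun s => S (t - s) (φ s) := fun φ hφ =>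
    jS.comp ((continuous_const.sub continuous_id).prodMk hφ)
  have hg : Continuous fun p : ℝ × ℝ => N (p.1 - p.2) • S (t - p.1) (Aw p.2) :=
    (hNc.comp (continuous_fst.sub continuous_snd)).smul
      (jS.comp ((continuous_const.sub continuous_fst).prodMk (hAwc.comp continuous_snd)))
  have hg' : Continuous fun p : ℝ × ℝ => deriv N (p.1 - p.2) • S (t - p.1) (w p.2) :=
    (hN'c.comp (continuous_fst.sub continuous_snd)).smul
      (jS.comp ((continuous_const.sub continuous_fst).prodMk (hw.comp continuous_snd)))
  -- key integration-by-parts identity at fixed `r`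
  have key : ∀ r : ℝ,
      α • (∫ s in r..t, N (s - r) • S (t - s) (Aw r))
        = N 0 • S (t - r) (w r) + (∫ s in r..t, deriv N (s - r) • S (t - s) (w r))
          - N (t - r) • w r := by
    intro r
    have hu : ∀ s : ℝ, HasDerivAt (fun s => N (s - r)) (deriv N (s - r)) s := by
      intro s
      have h1 : HasDerivAt (fun s : ℝ => s - r) 1 s := (hasDerivAt_id s).sub_const r
      simpa [Function.comp_def] using ((hNd (s - r)).hasDerivAt.comp s h1)
    have hv : ∀ s : ℝ, HasDerivAt (fun s => S (t - s) (w r))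
        ((-1 : ℝ) • (α • S (t - s) (Aw r))) s := by
      intro s
      have h1 : HasDerivAt (fun s : ℝ => t - s) (-1) s := by
        simpa using (hasDerivAt_id s).const_sub t
      exact (hgen ⟨w r, hmem r⟩ (t - s)).scomp s h1
    have hF : ∀ s : ℝ, HasDerivAt (fun s => N (s - r) • S (t - s) (w r))
        (N (s - r) • ((-1 : ℝ) • (α • S (t - s) (Aw r))) + deriv N (s - r) • S (t - s) (w r)) s :=
      fun s => (hu s).smul (hv s)
    have hc1 : Continuous fun s => N (s - r) • S (t - s) (Aw r) :=
      (hNc.comp (continuous_id.sub continuous_const)).smul (cS _ continuous_const)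
    have hc2 : Continuous fun s => deriv N (s - r) • S (t - s) (w r) :=
      (hN'c.comp (continuous_id.sub continuous_const)).smul (cS _ continuous_const)
    have hint1 : IntervalIntegrable (fun s => N (s - r) • S (t - s) (Aw r)) volume r t :=
      hc1.intervalIntegrable r t
    have hint2 : IntervalIntegrable (fun s => deriv N (s - r) • S (t - s) (w r)) volume r t :=
      hc2.intervalIntegrable r t
    have hcF : Continuous fun s =>
        N (s - r) • ((-1 : ℝ) • (α • S (t - s) (Aw r))) + deriv N (s - r) • S (t - s) (w r) :=
      ((hNc.comp (continuous_id.sub continuous_const)).smul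
        (((cS _ continuous_const).const_smul α).const_smul (-1 : ℝ))).add hc2
    have ftc := intervalIntegral.integral_eq_sub_of_hasDerivAt (fun s _ => hF s)
      (hcF.intervalIntegrable r t)
    have lhs_eq : (fun s => N (s - r) • ((-1 : ℝ) • (α • S (t - s) (Aw r)))
          + deriv N (s - r) • S (t - s) (w r))
        = fun s => (-α : ℝ) • (N (s - r) • S (t - s) (Aw r)) + deriv N (s - r) • S (t - s) (w r) := by
      funext s
      congr 1
      rw [smul_smul, smul_smul, smul_smul]
      congr 1
      ring
    rw [lhs_eq, intervalIntegral.integral_add (by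
        have h : Continuous fun s => (-α : ℝ) • (N (s - r) • S (t - s) (Aw r)) :=
          hc1.const_smul (-α : ℝ)
        exact h.intervalIntegrable r t)
      hint2, intervalIntegral.integral_smul, sub_self, hS0, sub_self] at ftc
    simp only [ContinuousLinearMap.id_apply] at ftc
    rw [neg_smul] at ftc
    have h2 : α • (∫ s in r..t, N (s - r) • S (t - s) (Aw r))
        = (∫ s in r..t, deriv N (s - r) • S (t - s) (w r))
          - (-(α • (∫ s in r..t, N (s - r) • S (t - s) (Aw r)))
            + (∫ s in r..t, deriv N (s - r) • S (t - s) (w r))) := by abel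
    rw [ftc] at h2
    rw [h2]
    abel
  -- the mild equation and the double-integral manipulations
  have e1 := hmild t ⟨ht0, htT⟩
  have e2 : (∫ s in (0 : ℝ)..t, S (t - s) (∫ r in (0 : ℝ)..s, N (s - r) • Aw r))
      = ∫ s in (0 : ℝ)..t, ∫ r in (0 : ℝ)..s, N (s - r) • S (t - s) (Aw r) := by
    apply intervalIntegral.integral_congr
    intro s _
    have hI : IntervalIntegrable (fun r => N (s - r) • Aw r) volume 0 s :=
      ((hNc.comp (continuous_const.sub continuous_id)).smul hAwc).intervalIntegrable 0 s
    beta_reduce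
    rw [← (S (t - s)).intervalIntegral_comp_comm hI]
    simp only [_root_.map_smul]
  have e3 := triangle_swap (fun s r => N (s - r) • S (t - s) (Aw r)) hg ht0
  have e4 : (∫ r in (0 : ℝ)..t, ∫ s in r..t, N (s - r) • S (t - s) (Aw r))
      = (1 / α) • ∫ r in (0 : ℝ)..t,
          (N 0 • S (t - r) (w r) + (∫ s in r..t, deriv N (s - r) • S (t - s) (w r))
            - N (t - r) • w r) := by
    rw [← intervalIntegral.integral_smul]
    apply intervalIntegral.integral_congr
    intro r _
    beta_reduce
    rw [← key r, smul_smul, one_div, inv_mul_cancel₀ hα', one_smul]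
  -- continuity of the middle inner integral in `r`
  have cInner : Continuous fun r => ∫ s in r..t, deriv N (s - r) • S (t - s) (w r) := by
    have h1 : Continuous fun r => ∫ s in t..r, deriv N (s - r) • S (t - s) (w r) := by
      apply intervalIntegral.continuous_parametric_intervalIntegral_of_continuous
        (f := fun r s => deriv N (s - r) • S (t - s) (w r)) ?_ continuous_id
      exact (hN'c.comp (continuous_snd.sub continuous_fst)).smul
        (jS.comp ((continuous_const.sub continuous_snd).prodMk (hw.comp continuous_fst)))
    have h2 : (fun r => ∫ s in r..t, deriv N (s - r) • S (t - s) (w r))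
        = fun r => -(∫ s in t..r, deriv N (s - r) • S (t - s) (w r)) := by
      funext r
      rw [← intervalIntegral.integral_symm]
    rw [h2]
    exact h1.neg
  have hintP : IntervalIntegrable (fun r => N 0 • S (t - r) (w r)) volume 0 t :=
    ((continuous_const).smul (cS w hw)).intervalIntegrable 0 t
  have hintQ : IntervalIntegrable (fun r => N (t - r) • w r) volume 0 t :=
    ((hNc.comp (continuous_const.sub continuous_id)).smul hw).intervalIntegrable 0 t
  have hintM : IntervalIntegrable
      (fun r => ∫ s in r..t, deriv N (s - r) • S (t - s) (w r)) volume 0 t :=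
    cInner.intervalIntegrable 0 t
  have e5 : (∫ r in (0 : ℝ)..t,
        (N 0 • S (t - r) (w r) + (∫ s in r..t, deriv N (s - r) • S (t - s) (w r))
          - N (t - r) • w r))
      = (∫ r in (0 : ℝ)..t, N 0 • S (t - r) (w r))
        + (∫ r in (0 : ℝ)..t, ∫ s in r..t, deriv N (s - r) • S (t - s) (w r))
        - ∫ r in (0 : ℝ)..t, N (t - r) • w r := by
    rw [intervalIntegral.integral_sub (hintP.add hintM) hintQ,
      intervalIntegral.integral_add hintP hintM]
  have e6 := triangle_swap (fun s r => deriv N (s - r) • S (t - s) (w r)) hg' ht0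
  have e7 : (∫ s in (0 : ℝ)..t, S (t - s) (N 0 • w s + ∫ r in (0 : ℝ)..s, deriv N (s - r) • w r))
      = (∫ s in (0 : ℝ)..t, N 0 • S (t - s) (w s))
        + ∫ s in (0 : ℝ)..t, ∫ r in (0 : ℝ)..s, deriv N (s - r) • S (t - s) (w r) := by
    have hcmid : Continuous fun s => ∫ r in (0 : ℝ)..s, deriv N (s - r) • S (t - s) (w r) := by
      apply intervalIntegral.continuous_parametric_intervalIntegral_of_continuous
        (f := fun s r => deriv N (s - r) • S (t - s) (w r)) hg' continuous_id
    rw [← intervalIntegral.integral_add (by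
        have h : Continuous fun s => N 0 • S (t - s) (w s) := continuous_const.smul (cS w hw)
        exact h.intervalIntegrable 0 t)
      (hcmid.intervalIntegrable 0 t)]
    apply intervalIntegral.integral_congr
    intro s _
    have hI : IntervalIntegrable (fun r => deriv N (s - r) • w r) volume 0 s :=
      ((hN'c.comp (continuous_const.sub continuous_id)).smul hw).intervalIntegrable 0 s
    beta_reduce
    rw [map_add, _root_.map_smul, ← (S (t - s)).intervalIntegral_comp_comm hI]
    simp only [_root_.map_smul]
  rw [e1, e2, e3, e4, e5, e7, ← e6]
  rw [smul_sub, smul_add]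
  abel
end

section
/- Let f : [0,∞) → ℂ be continuous with |f(t)| ≤ M e^{at}, and suppose the Laplace transform f̂(λ) = ∫₀^∞ e^{-λt} f(t) dt vanishes for all real λ > a. Then f ≡ 0. -/
open MeasureTheory Set

lemma moments_zero_aux (g : ℝ → ℝ) (hg : ContinuousOn g (Set.Icc 0 1))
    (hm : ∀ n : ℕ, ∫ u in Set.Ioo (0:ℝ) 1, u ^ n * g u = 0) :
    Set.EqOn g 0 (Set.Ioo (0:ℝ) 1) := by
  -- integrability facts
  have hgi : IntegrableOn g (Icc (0:ℝ) 1) := hg.integrableOn_compact isCompact_Icc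
  have hgsq : IntegrableOn (fun u => g u * g u) (Ioo (0:ℝ) 1) :=
    ((hg.mul hg).integrableOn_compact isCompact_Icc).mono_set Ioo_subset_Icc_self
  -- polynomial moments vanish
  have hpoly : ∀ p : Polynomial ℝ, ∫ u in Ioo (0:ℝ) 1, p.eval u * g u = 0 := by
    intro p
    have : ∀ u : ℝ, p.eval u * g u =
        ∑ i ∈ Finset.range (p.natDegree + 1), p.coeff i * (u ^ i * g u) := by
      intro u
      rw [Polynomial.eval_eq_sum_range, Finset.sum_mul]
      simp [mul_assoc]
    simp_rw [this]
    rw [integral_finset_sum]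
    · simp_rw [integral_const_mul, hm, mul_zero, Finset.sum_const, smul_zero]
    · intro i _
      apply Integrable.const_mul
      exact (((continuousOn_pow i).mul hg).integrableOn_compact isCompact_Icc).mono_set
        Ioo_subset_Icc_self
  -- ∫ g² = 0
  have key : ∫ u in Ioo (0:ℝ) 1, g u * g u = 0 := by
    have hnn : 0 ≤ ∫ u in Ioo (0:ℝ) 1, g u * g u :=
      integral_nonneg fun u => mul_self_nonneg _
    refine le_antisymm ?_ hnn
    refine le_of_forall_pos_le_add ?_
    intro ε hε
    set C : ℝ := ∫ u in Ioo (0:ℝ) 1, |g u|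
    have hC : 0 ≤ C := integral_nonneg fun u => abs_nonneg _
    have hε' : 0 < ε / (C + 1) := div_pos hε (by linarith)
    obtain ⟨p, hp⟩ := exists_polynomial_near_of_continuousOn 0 1 g hg (ε / (C+1)) hε'
    have h1 : ∫ u in Ioo (0:ℝ) 1, g u * g u
        = ∫ u in Ioo (0:ℝ) 1, (g u - p.eval u) * g u := by
      have : ∀ u : ℝ, (g u - p.eval u) * g u = g u * g u - p.eval u * g u := by ring_nf; simp
      simp_rw [this]
      rw [integral_sub hgsq, hpoly, sub_zero]
      exact ((p.continuousOn.mul hg).integrableOn_compact isCompact_Icc).mono_set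
        Ioo_subset_Icc_self
    have h2 : |∫ u in Ioo (0:ℝ) 1, (g u - p.eval u) * g u| ≤ ε / (C+1) * C := by
      calc |∫ u in Ioo (0:ℝ) 1, (g u - p.eval u) * g u|
          ≤ ∫ u in Ioo (0:ℝ) 1, |g u - p.eval u| * |g u| := by simpa [abs_mul] using norm_integral_le_integral_norm (μ := volume.restrict (Ioo (0:ℝ) 1)) (fun u => (g u - p.eval u) * g u)
        _ ≤ ∫ u in Ioo (0:ℝ) 1, ε / (C+1) * |g u| := by
            have i1 : IntegrableOn (fun u => |g u - p.eval u| * |g u|) (Ioo (0:ℝ) 1) :=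
              (((hg.sub p.continuousOn).abs.mul hg.abs).integrableOn_compact
                isCompact_Icc).mono_set Ioo_subset_Icc_self
            have i2 : IntegrableOn (fun u => ε / (C+1) * |g u|) (Ioo (0:ℝ) 1) :=
              ((hg.abs.integrableOn_compact isCompact_Icc).mono_set
                Ioo_subset_Icc_self).const_mul _
            have hpt : ∀ u ∈ Ioo (0:ℝ) 1, |g u - p.eval u| * |g u| ≤ ε / (C+1) * |g u| := by
              intro u hu
              refine mul_le_mul_of_nonneg_right ?_ (abs_nonneg _)
              rw [abs_sub_comm]
              exact (hp u (Ioo_subset_Icc_self hu)).le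
            exact setIntegral_mono_on i1 i2 measurableSet_Ioo hpt
        _ = ε / (C+1) * C := by rw [integral_const_mul]
    have h3 : ε / (C+1) * C ≤ ε := by
      rw [div_mul_eq_mul_div, mul_comm]
      rw [div_le_iff₀ (by linarith : (0:ℝ) < C + 1)]
      nlinarith
    rw [h1]
    calc ∫ u in Ioo (0:ℝ) 1, (g u - p.eval u) * g u
        ≤ |∫ u in Ioo (0:ℝ) 1, (g u - p.eval u) * g u| := le_abs_self _
      _ ≤ ε / (C+1) * C := h2
      _ ≤ ε := h3
      _ = 0 + ε := (zero_add ε).symm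
  -- conclude g = 0 on Ioo
  have hae : (fun u => g u * g u) =ᵐ[volume.restrict (Ioo (0:ℝ) 1)] 0 := by
    rw [← integral_eq_zero_iff_of_nonneg (fun u => mul_self_nonneg _) hgsq] at *
    exact key
  have := Measure.eqOn_Ioo_of_ae_eq (μ := volume) hae
    ((hg.mono Ioo_subset_Icc_self).mul (hg.mono Ioo_subset_Icc_self)) continuousOn_const
  intro u hu
  have h0 := this hu
  simp only [Pi.zero_apply] at h0
  exact mul_self_eq_zero.mp h0

/-- Injectivity of the Laplace transform on exponentially bounded continuous
functions: if `f : [0,∞) → ℂ` is continuous, `|f t| ≤ M exp (a t)`, and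
`∫₀^∞ exp (-λ t) f t dt = 0` for every real `λ > a`, then `f ≡ 0` on `[0,∞)`. -/
theorem laplace_transform_injective
    (f : ℝ → ℂ) (M a : ℝ)
    (hf : ContinuousOn f (Set.Ici 0))
    (hbound : ∀ t ≥ (0 : ℝ), ‖f t‖ ≤ M * Real.exp (a * t))
    (hvanish : ∀ l : ℝ, a < l →
        (∫ t in Set.Ioi (0 : ℝ), Real.exp (-l * t) • f t) = 0) :
    ∀ t ≥ (0 : ℝ), f t = 0 := by
  have hM : 0 ≤ M := by
    have h0 := hbound 0 le_rfl
    have h1 := norm_nonneg (f 0)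
    simp only [mul_zero, Real.exp_zero, mul_one] at h0
    linarith
  -- the substituted function on [0,1]
  set h : ℝ → ℂ := fun u => if 0 < u then (u ^ (a+1) : ℝ) • f (-Real.log u) else 0 with hh
  -- continuity of h on [0,1]
  have hcont : ContinuousOn h (Icc 0 1) := by
    intro u hu
    rcases eq_or_lt_of_le hu.1 with h0 | h0
    · -- u = 0 : squeeze
      subst h0
      have hzero : h 0 = 0 := by simp [hh]
      unfold ContinuousWithinAt
      rw [hzero]
      have hb2 : Filter.Tendsto (fun v : ℝ => M * v) (nhdsWithin 0 (Icc 0 1)) (nhds 0) := by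
        have hc : Continuous (fun v : ℝ => M * v) := continuous_const.mul continuous_id
        have := (hc.tendsto 0).mono_left (nhdsWithin_le_nhds (s := Icc (0:ℝ) 1))
        simpa using this
      refine squeeze_zero_norm' ?_ hb2
      filter_upwards [self_mem_nhdsWithin] with v hv
      rcases eq_or_lt_of_le hv.1 with hv0 | hv0
      · simp [hh, ← hv0]
      · have hlog : (0:ℝ) ≤ -Real.log v := by
          have := Real.log_nonpos hv.1 hv.2
          linarith
        have hb := hbound _ hlog
        have hn : ‖h v‖ = v ^ (a+1) * ‖f (-Real.log v)‖ := by
          simp only [hh, if_pos hv0, norm_smul, Real.norm_eq_abs]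
          rw [abs_of_nonneg (Real.rpow_nonneg hv.1 _)]
        rw [hn]
        have hexp : Real.exp (a * -Real.log v) = v ^ (-a) := by
          rw [Real.rpow_def_of_pos hv0]
          ring_nf
        calc v ^ (a+1) * ‖f (-Real.log v)‖
            ≤ v ^ (a+1) * (M * Real.exp (a * -Real.log v)) := by
              apply mul_le_mul_of_nonneg_left hb (Real.rpow_nonneg hv.1 _)
          _ = M * (v ^ (a+1) * v ^ (-a)) := by rw [hexp]; ring
          _ = M * v := by
              rw [← Real.rpow_add hv0]
              norm_num
    · -- u > 0
      have hmem : Ioi (0:ℝ) ∈ nhds u := Ioi_mem_nhds h0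
      have hev : h =ᶠ[nhdsWithin u (Icc 0 1)]
          fun v => (v ^ (a+1) : ℝ) • f (-Real.log v) := by
        filter_upwards [mem_nhdsWithin_of_mem_nhds hmem] with v hv
        simp only [hh]
        rw [if_pos (mem_Ioi.mp hv)]
      have c1 : ContinuousWithinAt (fun v : ℝ => (v ^ (a+1) : ℝ)) (Icc 0 1) u :=
        (Real.continuousAt_rpow_const u (a+1) (Or.inl h0.ne')).continuousWithinAt
      have c2 : ContinuousWithinAt (fun v : ℝ => f (-Real.log v)) (Icc 0 1) u := by
        have hlog : ContinuousWithinAt (fun v : ℝ => -Real.log v) (Icc 0 1) u :=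
          ((Real.continuousAt_log h0.ne').neg).continuousWithinAt
        refine ContinuousWithinAt.comp (hf _ ?_) hlog ?_
        · simp only [mem_Ici]
          have := Real.log_nonpos hu.1 hu.2
          linarith
        · intro v hv
          simp only [mem_Ici]
          have := Real.log_nonpos hv.1 hv.2
          linarith
      exact (c1.smul c2).congr_of_eventuallyEq hev (by simp only [hh]; rw [if_pos h0]; rfl)
  -- change of variables: moments of h vanish
  have hmom : ∀ n : ℕ, ∫ u in Ioo (0:ℝ) 1, (u ^ n : ℝ) • h u = 0 := by
    intro n
    have hderiv : ∀ t ∈ Ioi (0:ℝ),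
        HasDerivWithinAt (fun t : ℝ => Real.exp (-t)) (-Real.exp (-t)) (Ioi 0) t := by
      intro t _
      have := (hasDerivAt_id' t).neg.exp
      simpa using this.hasDerivWithinAt
    have hinj : InjOn (fun t : ℝ => Real.exp (-t)) (Ioi 0) := fun x _ y _ hxy => by
      have := Real.exp_injective hxy
      linarith
    have himg : (fun t : ℝ => Real.exp (-t)) '' Ioi 0 = Ioo 0 1 := by
      ext x
      constructor
      · rintro ⟨t, ht, rfl⟩
        exact ⟨Real.exp_pos _, Real.exp_lt_one_iff.mpr (by simpa using ht)⟩
      · rintro ⟨hx0, hx1⟩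
        exact ⟨-Real.log x, by simpa using Real.log_neg hx0 hx1, by simp [Real.exp_log hx0]⟩
    have key := integral_image_eq_integral_abs_deriv_smul measurableSet_Ioi hderiv hinj
      (fun u => (u ^ n : ℝ) • h u)
    rw [himg] at key
    rw [key]
    have hcongr : ∀ t ∈ Ioi (0:ℝ),
        |(-Real.exp (-t))| • ((Real.exp (-t) ^ n : ℝ) • h (Real.exp (-t)))
          = Real.exp (-(n + a + 2) * t) • f t := by
      intro t ht
      have hpos : 0 < Real.exp (-t) := Real.exp_pos _
      have hlog : -Real.log (Real.exp (-t)) = t := by simp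
      simp only [hh, if_pos hpos, hlog, abs_neg, abs_of_pos hpos]
      rw [smul_smul, smul_smul]
      congr 1
      rw [← Real.exp_nat_mul, Real.rpow_def_of_pos hpos, Real.log_exp,
        ← Real.exp_add, ← Real.exp_add]
      congr 1
      ring
    rw [setIntegral_congr_fun measurableSet_Ioi hcongr]
    exact hvanish _ (by have : (0:ℝ) ≤ (n:ℝ) := Nat.cast_nonneg n; linarith)
  -- integrability of the moment integrands
  have hinth : ∀ n : ℕ, IntegrableOn (fun u => (u ^ n : ℝ) • h u) (Ioo (0:ℝ) 1) := fun n =>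
    (((continuousOn_pow n).smul hcont).integrableOn_compact isCompact_Icc).mono_set
      Ioo_subset_Icc_self
  -- real and imaginary parts vanish on (0,1)
  have hre : Set.EqOn (fun u => (h u).re) 0 (Ioo (0:ℝ) 1) := by
    apply moments_zero_aux _ (Complex.continuous_re.comp_continuousOn hcont)
    intro n
    have h2 := integral_re (μ := volume.restrict (Ioo (0:ℝ) 1)) (hinth n)
    simp only [RCLike.re_to_complex, Complex.smul_re, smul_eq_mul] at h2
    simp only [Function.comp_apply]
    rw [h2, hmom n, Complex.zero_re]
  have him : Set.EqOn (fun u => (h u).im) 0 (Ioo (0:ℝ) 1) := by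
    apply moments_zero_aux _ (Complex.continuous_im.comp_continuousOn hcont)
    intro n
    have h2 := integral_im (μ := volume.restrict (Ioo (0:ℝ) 1)) (hinth n)
    simp only [RCLike.im_to_complex, Complex.smul_im, smul_eq_mul] at h2
    simp only [Function.comp_apply]
    rw [h2, hmom n, Complex.zero_im]
  have hzero : Set.EqOn h 0 (Ioo (0:ℝ) 1) := by
    intro u hu
    have e1 := hre hu
    have e2 := him hu
    simp only [Pi.zero_apply] at e1 e2 ⊢
    exact Complex.ext e1 e2
  -- f vanishes on (0, ∞)
  have hpos : ∀ t : ℝ, 0 < t → f t = 0 := by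
    intro t ht
    have hu : Real.exp (-t) ∈ Ioo (0:ℝ) 1 :=
      ⟨Real.exp_pos _, Real.exp_lt_one_iff.mpr (by simpa using ht)⟩
    have hz := hzero hu
    simp only [hh, Pi.zero_apply, if_pos hu.1, Real.log_exp, neg_neg] at hz
    rcases smul_eq_zero.mp hz with h1 | h1
    · exact absurd h1 (Real.rpow_pos_of_pos hu.1 _).ne'
    · exact h1
  -- f 0 = 0 by continuity
  intro t ht
  rcases eq_or_lt_of_le ht with h0 | h0
  · subst h0
    have h1 : Filter.Tendsto f (nhdsWithin 0 (Ioi 0)) (nhds (f 0)) :=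
      (hf 0 (mem_Ici.mpr le_rfl)).mono_left (nhdsWithin_mono _ Ioi_subset_Ici_self)
    have h2 : Filter.Tendsto f (nhdsWithin 0 (Ioi 0)) (nhds 0) := by
      apply Filter.Tendsto.congr' _ tendsto_const_nhds
      filter_upwards [self_mem_nhdsWithin] with s hs
      exact (hpos s hs).symm
    exact tendsto_nhds_unique h1 h2
  · exact hpos t h0
end
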